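/- For every positive definite Hermitian matrix σ and all matrices X, Y on a finite-dimensional complex Hilbert space, tr(Y · T_σ(X)) = tr(T_σ(Y) · X), where T_σ(Z) = ∫₀^∞ (σ + s·1)⁻¹ Z (σ + s·1)⁻¹ ds. In particular tr(σ · T_σ(X)) = tr(X). -/

import Mathlib

open Matrix MeasureTheory
open scoped ComplexOrder Topology
open Set Filter

/-- `T_σ(Z) = ∫₀^∞ (σ + s·1)⁻¹ Z (σ + s·1)⁻¹ ds`, defined entrywise. -/
noncomputable def Tmap {n : ℕ} (σ Z : Matrix (Fin n) (Fin n) ℂ) : Matrix (Fin n) (Fin n) ℂ :=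
  Matrix.of fun i j =>
    ∫ s in Set.Ioi (0 : ℝ),
      ((σ + (s : ℂ) • (1 : Matrix (Fin n) (Fin n) ℂ))⁻¹ * Z
        * (σ + (s : ℂ) • (1 : Matrix (Fin n) (Fin n) ℂ))⁻¹) i j

lemma hasDerivAt_aux (m x : ℝ) (hx : 0 < m + x) :
    HasDerivAt (fun s : ℝ => -(m + s)⁻¹) (((m + x) ^ 2)⁻¹) x := by
  have h1 : HasDerivAt (fun s : ℝ => m + s) 1 x := (hasDerivAt_id x).const_add m
  have h2 := (h1.inv hx.ne').neg
  rw [show ((m + x) ^ 2)⁻¹ = -(-1 / (m + x) ^ 2) by rw [neg_div, neg_neg, one_div]]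
  exact h2

lemma tendsto_aux (m : ℝ) : Tendsto (fun s : ℝ => -(m + s)⁻¹) atTop (𝓝 0) := by
  have h : Tendsto (fun s : ℝ => m + s) atTop atTop :=
    tendsto_atTop_add_const_left _ m tendsto_id
  simpa using (tendsto_inv_atTop_zero.comp h).neg

lemma integrableOn_inv_sq (m : ℝ) (hm : 0 < m) :
    IntegrableOn (fun s : ℝ => ((m + s) ^ 2)⁻¹) (Ioi 0) := by
  refine integrableOn_Ioi_deriv_of_nonneg ?_ (fun x hx => hasDerivAt_aux m x (by
    have := hx.out; linarith)) (fun x _ => by positivity) (tendsto_aux m)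
  exact (hasDerivAt_aux m 0 (by simpa)).continuousAt.continuousWithinAt

lemma integral_inv_sq (m : ℝ) (hm : 0 < m) :
    ∫ s in Ioi (0:ℝ), ((m + s) ^ 2)⁻¹ = m⁻¹ := by
  have := integral_Ioi_of_hasDerivAt_of_tendsto'
    (f := fun s : ℝ => -(m + s)⁻¹) (f' := fun s : ℝ => ((m + s) ^ 2)⁻¹) (a := 0)
    (fun x hx => hasDerivAt_aux m x (by have := hx.out; linarith))
    (integrableOn_inv_sq m hm) (tendsto_aux m)
  simpa using this

lemma integrableOn_inv_mul (p q : ℝ) (hp : 0 < p) (hq : 0 < q) :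
    IntegrableOn (fun s : ℝ => (p + s)⁻¹ * (q + s)⁻¹) (Ioi 0) := by
  have hm : 0 < min p q := lt_min hp hq
  refine (integrableOn_inv_sq _ hm).mono' ?_ ?_
  · refine (ContinuousOn.mul ?_ ?_).aestronglyMeasurable measurableSet_Ioi
    · exact ((continuous_const.add continuous_id).continuousOn).inv₀
        fun x hx => by have := hx.out; simp only [Pi.add_apply, id]; positivity
    · exact ((continuous_const.add continuous_id).continuousOn).inv₀
        fun x hx => by have := hx.out; simp only [Pi.add_apply, id]; positivity
  · rw [ae_restrict_iff' measurableSet_Ioi]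
    filter_upwards with x hx
    have hx0 : (0:ℝ) < x := hx
    have h1 : (0:ℝ) < min p q + x := by positivity
    rw [Real.norm_eq_abs, abs_of_nonneg (by positivity), sq, mul_inv]
    gcongr <;> simp [min_le_left, min_le_right]

lemma resolvent_eq {n : ℕ} (σ : Matrix (Fin n) (Fin n) ℂ) (hσ : σ.PosDef)
    (s : ℝ) (hs : 0 < s) :
    (σ + (s : ℂ) • (1 : Matrix (Fin n) (Fin n) ℂ))⁻¹ =
      (hσ.1.eigenvectorUnitary : Matrix (Fin n) (Fin n) ℂ) *
        Matrix.diagonal (fun a => (((hσ.1.eigenvalues a + s : ℝ)) : ℂ)⁻¹) *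
        star (hσ.1.eigenvectorUnitary : Matrix (Fin n) (Fin n) ℂ) := by
  set U : Matrix (Fin n) (Fin n) ℂ := (hσ.1.eigenvectorUnitary : Matrix (Fin n) (Fin n) ℂ) with hU
  set d : Fin n → ℂ := fun a => ((hσ.1.eigenvalues a + s : ℝ) : ℂ) with hd
  have hU1 : U * star U = 1 := (Matrix.mem_unitaryGroup_iff).mp (hσ.1.eigenvectorUnitary).2
  have hU2 : star U * U = 1 := (Matrix.mem_unitaryGroup_iff').mp (hσ.1.eigenvectorUnitary).2
  have hne : ∀ a, d a ≠ 0 := by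
    intro a
    have := hσ.eigenvalues_pos a
    simp only [hd, ne_eq, Complex.ofReal_eq_zero]
    positivity
  have hσs : σ + (s : ℂ) • (1 : Matrix (Fin n) (Fin n) ℂ) =
      U * Matrix.diagonal d * star U := by
    conv_lhs => rw [hσ.1.spectral_theorem, Unitary.conjStarAlgAut_apply]
    have h1 : (s : ℂ) • (1 : Matrix (Fin n) (Fin n) ℂ) =
        U * ((s : ℂ) • (1 : Matrix (Fin n) (Fin n) ℂ)) * star U := by
      rw [mul_smul_comm, mul_one, smul_mul_assoc, hU1]
    rw [h1, ← add_mul, ← Matrix.mul_add, Matrix.smul_one_eq_diagonal, Matrix.diagonal_add]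
    congr 2
    funext a
    simp [hd, Function.comp]
  rw [hσs]
  apply Matrix.inv_eq_right_inv
  calc U * Matrix.diagonal d * star U * (U * Matrix.diagonal (fun a => (d a)⁻¹) * star U)
      = U * (Matrix.diagonal d * (star U * U) * Matrix.diagonal (fun a => (d a)⁻¹)) * star U := by
        simp only [Matrix.mul_assoc]
    _ = 1 := by
        rw [hU2, Matrix.mul_one, Matrix.diagonal_mul_diagonal]
        have : (fun a => d a * (d a)⁻¹) = fun _ => (1:ℂ) := by
          funext a; exact mul_inv_cancel₀ (hne a)
        rw [this, Matrix.diagonal_one, Matrix.mul_one, hU1]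

lemma conj_entry {n : ℕ} (U M : Matrix (Fin n) (Fin n) ℂ) (d : Fin n → ℂ) (i j : Fin n) :
    (U * (Matrix.diagonal d * M * Matrix.diagonal d) * star U) i j
      = ∑ b, ∑ a, U i a * M a b * star U b j * (d a * d b) := by
  have hmid : Matrix.diagonal d * M * Matrix.diagonal d
      = Matrix.of (fun a b => d a * M a b * d b) := by
    ext a b
    rw [Matrix.mul_diagonal, Matrix.diagonal_mul]
    rfl
  rw [hmid]
  simp only [Matrix.mul_apply, Matrix.of_apply, Finset.sum_mul]
  exact Finset.sum_congr rfl fun b _ => Finset.sum_congr rfl fun a _ => by ring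

lemma Tmap_eq {n : ℕ} (σ X : Matrix (Fin n) (Fin n) ℂ) (hσ : σ.PosDef) :
    Tmap σ X = (hσ.1.eigenvectorUnitary : Matrix (Fin n) (Fin n) ℂ) *
      Matrix.of (fun a b =>
        (star (hσ.1.eigenvectorUnitary : Matrix (Fin n) (Fin n) ℂ) * X *
          (hσ.1.eigenvectorUnitary : Matrix (Fin n) (Fin n) ℂ)) a b *
        ((∫ s in Set.Ioi (0:ℝ),
            (hσ.1.eigenvalues a + s)⁻¹ * (hσ.1.eigenvalues b + s)⁻¹ : ℝ) : ℂ)) *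
      star (hσ.1.eigenvectorUnitary : Matrix (Fin n) (Fin n) ℂ) := by
  set U : Matrix (Fin n) (Fin n) ℂ := (hσ.1.eigenvectorUnitary : Matrix (Fin n) (Fin n) ℂ)
    with hU
  set lam : Fin n → ℝ := hσ.1.eigenvalues with hlam
  set Xt : Matrix (Fin n) (Fin n) ℂ := star U * X * U with hXt
  have hpos : ∀ a, 0 < lam a := hσ.eigenvalues_pos
  ext i j
  show (∫ s in Set.Ioi (0:ℝ),
      ((σ + (s : ℂ) • 1)⁻¹ * X * (σ + (s : ℂ) • 1)⁻¹) i j) = _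
  have hpt : Set.EqOn
      (fun s : ℝ => ((σ + (s : ℂ) • 1)⁻¹ * X * (σ + (s : ℂ) • 1)⁻¹) i j)
      (fun s : ℝ => ∑ b, ∑ a, U i a * Xt a b * star U b j *
        (((lam a + s)⁻¹ * (lam b + s)⁻¹ : ℝ) : ℂ)) (Set.Ioi 0) := by
    intro s hs
    have hs' : (0:ℝ) < s := hs
    simp only
    rw [resolvent_eq σ hσ s hs']
    have hassoc : U * Matrix.diagonal (fun a => ((lam a + s : ℝ) : ℂ)⁻¹) * star U * X *
        (U * Matrix.diagonal (fun a => ((lam a + s : ℝ) : ℂ)⁻¹) * star U)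
        = U * (Matrix.diagonal (fun a => ((lam a + s : ℝ) : ℂ)⁻¹) * Xt *
            Matrix.diagonal (fun a => ((lam a + s : ℝ) : ℂ)⁻¹)) * star U := by
      rw [hXt]; simp only [Matrix.mul_assoc]
    rw [hassoc, conj_entry]
    refine Finset.sum_congr rfl fun b _ => Finset.sum_congr rfl fun a _ => ?_
    push_cast
    ring
  rw [setIntegral_congr_fun measurableSet_Ioi hpt]
  have hint : ∀ a b : Fin n, Integrable
      (fun s : ℝ => U i a * Xt a b * star U b j *
        (((lam a + s)⁻¹ * (lam b + s)⁻¹ : ℝ) : ℂ)) (volume.restrict (Set.Ioi 0)) := by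
    intro a b
    exact ((integrableOn_inv_mul _ _ (hpos a) (hpos b)).ofReal).const_mul _
  rw [integral_finset_sum _ (fun b _ => integrable_finset_sum _ (fun a _ => hint a b))]
  have hrhs : (U * Matrix.of (fun a b => Xt a b *
      ((∫ s in Set.Ioi (0:ℝ), (lam a + s)⁻¹ * (lam b + s)⁻¹ : ℝ) : ℂ)) * star U) i j
      = ∑ b, ∑ a, U i a * (Xt a b *
        ((∫ s in Set.Ioi (0:ℝ), (lam a + s)⁻¹ * (lam b + s)⁻¹ : ℝ) : ℂ)) * star U b j := by
    simp only [Matrix.mul_apply, Matrix.of_apply, Finset.sum_mul]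
  rw [hrhs]
  refine Finset.sum_congr rfl fun b _ => ?_
  rw [integral_finset_sum _ (fun a _ => hint a b)]
  refine Finset.sum_congr rfl fun a _ => ?_
  rw [integral_const_mul]
  rw [show (∫ s in Set.Ioi (0:ℝ), (((lam a + s)⁻¹ * (lam b + s)⁻¹ : ℝ) : ℂ)) =
      (((∫ s in Set.Ioi (0:ℝ), (lam a + s)⁻¹ * (lam b + s)⁻¹ : ℝ)) : ℂ) from integral_ofReal]
  ring

lemma trace_mul_apply' {n : ℕ} (A B : Matrix (Fin n) (Fin n) ℂ) :
    (A * B).trace = ∑ i, ∑ j, A i j * B j i := by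
  simp [Matrix.trace, Matrix.mul_apply]

lemma trace_conj_left {n : ℕ} (U : Matrix (Fin n) (Fin n) ℂ) (B W : Matrix (Fin n) (Fin n) ℂ) :
    (B * (U * W * star U)).trace = ((star U * B * U) * W).trace := by
  rw [show B * (U * W * star U) = B * U * W * star U from by simp only [Matrix.mul_assoc]]
  rw [Matrix.trace_mul_comm (B * U * W) (star U)]
  rw [show star U * (B * U * W) = (star U * B * U) * W from by simp only [Matrix.mul_assoc]]

lemma trace_conj_right {n : ℕ} (U : Matrix (Fin n) (Fin n) ℂ) (B W : Matrix (Fin n) (Fin n) ℂ) :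
    ((U * W * star U) * B).trace = (W * (star U * B * U)).trace := by
  rw [show (U * W * star U) * B = U * (W * star U * B) from by simp only [Matrix.mul_assoc]]
  rw [Matrix.trace_mul_comm U (W * star U * B)]
  rw [show W * star U * B * U = W * (star U * B * U) from by simp only [Matrix.mul_assoc]]

theorem trace_Tmap_self_adjoint {n : ℕ} (σ X Y : Matrix (Fin n) (Fin n) ℂ) (hσ : σ.PosDef) :
    (Y * Tmap σ X).trace = (Tmap σ Y * X).trace ∧ (σ * Tmap σ X).trace = X.trace := by
  have hpos : ∀ a, 0 < hσ.1.eigenvalues a := hσ.eigenvalues_pos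
  have hU1 : (hσ.1.eigenvectorUnitary : Matrix (Fin n) (Fin n) ℂ) *
      star (hσ.1.eigenvectorUnitary : Matrix (Fin n) (Fin n) ℂ) = 1 :=
    (Matrix.mem_unitaryGroup_iff).mp (hσ.1.eigenvectorUnitary).2
  constructor
  · rw [Tmap_eq σ X hσ, Tmap_eq σ Y hσ, trace_conj_left, trace_conj_right]
    rw [trace_mul_apply', trace_mul_apply']
    simp only [Matrix.of_apply]
    refine Finset.sum_congr rfl fun i _ => Finset.sum_congr rfl fun j _ => ?_
    have hsym : (∫ s in Set.Ioi (0:ℝ),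
          (hσ.1.eigenvalues j + s)⁻¹ * (hσ.1.eigenvalues i + s)⁻¹)
        = ∫ s in Set.Ioi (0:ℝ),
          (hσ.1.eigenvalues i + s)⁻¹ * (hσ.1.eigenvalues j + s)⁻¹ :=
      congrArg _ (funext fun s => mul_comm _ _)
    rw [hsym]
    ring
  · rw [Tmap_eq σ X hσ, trace_conj_left, show star (hσ.1.eigenvectorUnitary : Matrix (Fin n) (Fin n) ℂ) * σ *
        (hσ.1.eigenvectorUnitary : Matrix (Fin n) (Fin n) ℂ) =
        Matrix.diagonal (RCLike.ofReal ∘ hσ.1.eigenvalues) from by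
          simpa using hσ.1.conjStarAlgAut_star_eigenvectorUnitary]
    have hIa : ∀ a, ((hσ.1.eigenvalues a : ℂ)) *
        ((∫ s in Set.Ioi (0:ℝ),
          (hσ.1.eigenvalues a + s)⁻¹ * (hσ.1.eigenvalues a + s)⁻¹ : ℝ) : ℂ) = 1 := by
      intro a
      have h2 : (fun s : ℝ => (hσ.1.eigenvalues a + s)⁻¹ * (hσ.1.eigenvalues a + s)⁻¹)
          = fun s : ℝ => ((hσ.1.eigenvalues a + s) ^ 2)⁻¹ :=
        funext fun s => by rw [← mul_inv, ← sq]
      have : (∫ s in Set.Ioi (0:ℝ),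
          (hσ.1.eigenvalues a + s)⁻¹ * (hσ.1.eigenvalues a + s)⁻¹) = (hσ.1.eigenvalues a)⁻¹ := by
        rw [show (∫ s in Set.Ioi (0:ℝ),
            (hσ.1.eigenvalues a + s)⁻¹ * (hσ.1.eigenvalues a + s)⁻¹)
          = ∫ s in Set.Ioi (0:ℝ), ((hσ.1.eigenvalues a + s) ^ 2)⁻¹ from congrArg _ h2]
        exact integral_inv_sq _ (hpos a)
      rw [this, ← Complex.ofReal_mul, mul_inv_cancel₀ (hpos a).ne', Complex.ofReal_one]
    have htr : X.trace = (star (hσ.1.eigenvectorUnitary : Matrix (Fin n) (Fin n) ℂ) * X *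
        (hσ.1.eigenvectorUnitary : Matrix (Fin n) (Fin n) ℂ)).trace := by
      rw [Matrix.trace_mul_cycle, hU1, Matrix.one_mul]
    rw [htr]
    simp only [Matrix.trace, Matrix.diag_apply, Matrix.diagonal_mul, Matrix.of_apply,
      Function.comp]
    refine Finset.sum_congr rfl fun a _ => ?_
    rw [mul_left_comm]
    have h3 : (RCLike.ofReal (hσ.1.eigenvalues a) : ℂ) *
        ((∫ s in Set.Ioi (0:ℝ),
          (hσ.1.eigenvalues a + s)⁻¹ * (hσ.1.eigenvalues a + s)⁻¹ : ℝ) : ℂ) = 1 := hIa a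
    rw [h3, mul_one]
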